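/- arXiv:2508.17559 — 4 statements merged into one kernel-verified Lean document; each statement's English description precedes it below -/
import Mathlib

section
/- Let n ≥ 2k, a = ⌈n/k⌉, and let v₁,…,v_a be k-subsets of {1,…,n} whose union is {1,…,n}. If b is a real number and x is a k-subset with |x ∩ v_i| < k − b + i for all i = 1,…,a, then k < a(k−b) + a(a+1)/2; moreover if b = (1−1/a)k + (a+1)/2 this is a contradiction, i.e., no such x exists. -/
open Finset

/-- A burning sequence of length `b`: vertex `v i` is burned at time `i+1`,
so it covers the ball of radius `b - (i+1)` by time `b`. -/
def IsBurningSeq {V : Type*} (G : SimpleGraph V) {b : ℕ} (v : Fin b → V) : Prop :=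
  ∀ x : V, ∃ i : Fin b, G.dist (v i) x ≤ b - 1 - (i : ℕ)

/-- The burning number of a graph: the least length of a burning sequence. -/
noncomputable def burningNumber {V : Type*} (G : SimpleGraph V) : ℕ :=
  sInf {b | ∃ v : Fin b → V, IsBurningSeq G v}

/-- The hypercube graph `Q_n` on `{0,1}^n`: adjacency is Hamming distance one. -/
def cubeGraph (n : ℕ) : SimpleGraph (Fin n → Bool) where
  Adj x y := hammingDist x y = 1
  symm := ⟨fun x y h => by (try dsimp only at h ⊢); rwa [hammingDist_comm]⟩
  loopless := ⟨fun x h => by (try dsimp only at h); simp [hammingDist_self] at h⟩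

/-- The Hamming graph `H(n,q)` on `[q]^n`: adjacency is Hamming distance one. -/
def hammingGraph (n q : ℕ) : SimpleGraph (Fin n → Fin q) where
  Adj x y := hammingDist x y = 1
  symm := ⟨fun x y h => by (try dsimp only at h ⊢); rwa [hammingDist_comm]⟩
  loopless := ⟨fun x h => by (try dsimp only at h); simp [hammingDist_self] at h⟩

/-- The Johnson graph `J(n,k)` on `k`-subsets of `[n]`. -/
def johnsonGraph (n k : ℕ) : SimpleGraph {s : Finset (Fin n) // s.card = k} where
  Adj u v := u ≠ v ∧ (u.1 ∩ v.1).card = k - 1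
  symm := ⟨by rintro u v ⟨h1, h2⟩; exact ⟨h1.symm, by rwa [Finset.inter_comm]⟩⟩
  loopless := ⟨by rintro u ⟨h1, -⟩; exact h1 rfl⟩

/-- The halved `n`-cube on even-weight vectors of `F₂^n`: adjacency is Hamming distance two. -/
def halvedCubeGraph (n : ℕ) : SimpleGraph {x : Fin n → ZMod 2 // ∑ i, x i = 0} where
  Adj x y := hammingDist x.1 y.1 = 2
  symm := ⟨fun x y h => by (try dsimp only at h ⊢); rwa [hammingDist_comm]⟩
  loopless := ⟨fun x h => by (try dsimp only at h); simp [hammingDist_self] at h⟩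

/-- The cycle `C_n` on `ℤ_n`. -/
def cycleGraphZMod (n : ℕ) : SimpleGraph (ZMod n) where
  Adj x y := x ≠ y ∧ (x - y = 1 ∨ y - x = 1)
  symm := ⟨by rintro x y ⟨h1, h2⟩; exact ⟨h1.symm, h2.symm⟩⟩
  loopless := ⟨by rintro x ⟨h1, -⟩; exact h1 rfl⟩

/-- If `v₁, …, v_a` are `k`-subsets of `[n]` covering `[n]` (`a = ⌈n/k⌉`),
`b : ℝ`, and `x` is a `k`-subset with `|x ∩ v_i| < k - b + i` for all `i = 1, …, a`, then
`k < a(k - b) + a(a+1)/2`; and if `b = (1 - 1/a)k + (a+1)/2` this is a contradiction. -/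
theorem johnson_unburned_contradiction (n k : ℕ) (hk : 1 ≤ k) (hn : 2 * k ≤ n)
    (a : ℕ) (ha : a = ⌈(n : ℝ) / k⌉₊)
    (v : Fin a → Finset (Fin n)) (hv : ∀ i, (v i).card = k)
    (hcover : ∀ m : Fin n, ∃ i, m ∈ v i)
    (b : ℝ) (x : Finset (Fin n)) (hx : x.card = k)
    (hlt : ∀ i : Fin a, ((x ∩ v i).card : ℝ) < k - b + ((i : ℕ) + 1)) :
    (k : ℝ) < a * (k - b) + a * (a + 1) / 2 ∧
      (b = (1 - 1 / (a : ℝ)) * k + ((a : ℝ) + 1) / 2 → False) := by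
  have hn2 : 2 ≤ n := le_trans (by omega) hn
  have ha1 : 1 ≤ a := by
    rw [ha, Nat.one_le_ceil_iff]
    have hk0 : (0:ℝ) < k := by exact_mod_cast hk
    have hn0 : (0:ℝ) < n := by positivity
    positivity
  haveI : NeZero a := ⟨by omega⟩
  have hsub : x ⊆ Finset.univ.biUnion (fun i => x ∩ v i) := by
    intro m hm
    obtain ⟨i, hi⟩ := hcover m
    exact Finset.mem_biUnion.mpr ⟨i, Finset.mem_univ i, Finset.mem_inter.mpr ⟨hm, hi⟩⟩
  have hksum : k ≤ ∑ i, (x ∩ v i).card := by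
    calc k = x.card := hx.symm
      _ ≤ _ := Finset.card_le_card hsub
      _ ≤ _ := Finset.card_biUnion_le
  have hsumR : (k:ℝ) ≤ ∑ i : Fin a, ((x ∩ v i).card : ℝ) := by exact_mod_cast hksum
  have hne : (Finset.univ : Finset (Fin a)).Nonempty := Finset.univ_nonempty
  have hstrict : ∑ i : Fin a, ((x ∩ v i).card : ℝ) <
      ∑ i : Fin a, ((k:ℝ) - b + ((i:ℕ)+1)) :=
    Finset.sum_lt_sum_of_nonempty hne (fun i _ => hlt i)
  have hgauss : ∑ i : Fin a, (((i:ℕ):ℝ)+1) = a * (a + 1) / 2 := by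
    have h1 : ∑ i : Fin a, (((i:ℕ):ℝ)+1) = (∑ i ∈ Finset.range a, (i:ℝ)) + a := by
      rw [Fin.sum_univ_eq_sum_range (fun i => ((i:ℝ)+1)), Finset.sum_add_distrib]
      simp
    have h2 : (∑ i ∈ Finset.range a, (i:ℝ)) * 2 = a * (a - 1) := by
      have := Finset.sum_range_id_mul_two a
      have : ((∑ i ∈ Finset.range a, i) * 2 : ℕ) = (a * (a-1) : ℕ) := this
      calc (∑ i ∈ Finset.range a, (i:ℝ)) * 2 = (((∑ i ∈ Finset.range a, i) * 2 : ℕ) : ℝ) := by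
            push_cast; ring
        _ = ((a * (a-1) : ℕ) : ℝ) := by rw [this]
        _ = a * (a - 1) := by
            have : (1:ℕ) ≤ a := ha1
            push_cast [this]; ring
    rw [h1]; linarith
  have hsum2 : ∑ i : Fin a, ((k:ℝ) - b + ((i:ℕ)+1)) = a * (k - b) + a * (a + 1) / 2 := by
    rw [Finset.sum_add_distrib, Finset.sum_const, hgauss]
    simp only [Finset.card_univ, Fintype.card_fin, nsmul_eq_mul]
  have hmain : (k : ℝ) < a * (k - b) + a * (a + 1) / 2 := by
    rw [← hsum2]; linarith
  refine ⟨hmain, fun hb => ?_⟩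
  have ha0 : (a:ℝ) ≠ 0 := by
    have : (1:ℝ) ≤ a := by exact_mod_cast ha1
    linarith
  have : (a:ℝ) * (k - b) + a * (a + 1) / 2 = k := by
    rw [hb]; field_simp; ring
  linarith
end

section
/- The burning number of the halved n-cube (1/2)H(n,2) is at most ⌈n/4⌉ + 1. -/
open Finset

lemma zmod2_ne_iff (a b : ZMod 2) : (if a ≠ b then (1 : ZMod 2) else 0) = a + b := by
  revert a b; decide

lemma ham_cast (n : ℕ) (x y : Fin n → ZMod 2) :
    (hammingDist x y : ZMod 2) = ∑ i, (x i + y i) := by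
  rw [hammingDist, ← Finset.sum_boole]
  exact Finset.sum_congr rfl fun i _ => zmod2_ne_iff _ _

lemma card_filter_val_lt (n m : ℕ) (h : m ≤ n) :
    #({k : Fin n | (k : ℕ) < m} : Finset (Fin n)) = m := by
  rw [show m = #(range m) from (Finset.card_range m).symm]
  apply Finset.card_bij (fun (a : Fin n) _ => (a : ℕ))
  · intro a ha; simp at ha ⊢; omega
  · intro a _ b _ hab; exact Fin.val_injective hab
  · intro b hb; simp at hb
    exact ⟨⟨b, lt_of_lt_of_le hb h⟩, by simp; omega, rfl⟩


lemma zmod2_succ_ne (a b : ZMod 2) (h : a ≠ b) : a + 1 = b := by revert a b; decide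

lemma halvedCube_walk (n : ℕ) : ∀ (d : ℕ) (x y : {x : Fin n → ZMod 2 // ∑ i, x i = 0}),
    hammingDist x.1 y.1 = 2 * d → ∃ w : (halvedCubeGraph n).Walk x y, w.length ≤ d := by
  intro d
  induction d with
  | zero =>
    intro x y h
    rw [mul_zero] at h
    have hxy : x = y := Subtype.ext (hammingDist_eq_zero.mp h)
    subst hxy
    exact ⟨SimpleGraph.Walk.nil, le_refl 0⟩
  | succ d ih =>
    intro x y h
    have h' : #({k : Fin n | x.1 k ≠ y.1 k} : Finset (Fin n)) = 2 * (d + 1) := h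
    obtain ⟨i, hi, j, hj, hij⟩ := Finset.one_lt_card.mp (show 1 < #({k : Fin n | x.1 k ≠ y.1 k} : Finset (Fin n)) by omega)
    rw [Finset.mem_filter] at hi hj
    set z : Fin n → ZMod 2 :=
      fun k => x.1 k + (if k = i then 1 else 0) + (if k = j then 1 else 0) with hzdef
    have hz_i : z i = y.1 i := by
      simp only [hzdef, if_pos rfl, if_neg hij]
      rw [add_zero]; exact zmod2_succ_ne _ _ hi.2
    have hz_j : z j = y.1 j := by
      simp only [hzdef, if_pos rfl, if_neg (Ne.symm hij)]
      rw [add_zero]; exact zmod2_succ_ne _ _ hj.2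
    have hz_k : ∀ k, k ≠ i → k ≠ j → z k = x.1 k := by
      intro k h1 h2; simp [hzdef, if_neg h1, if_neg h2]
    have hzsum : ∑ k, z k = 0 := by
      simp only [hzdef, Finset.sum_add_distrib, x.2, Finset.sum_ite_eq',
        Finset.mem_univ, if_true]
      decide
    set zz : {x : Fin n → ZMod 2 // ∑ i, x i = 0} := ⟨z, hzsum⟩ with hzz
    have hadj : (halvedCubeGraph n).Adj x zz := by
      show hammingDist x.1 z = 2
      have hset : ({k : Fin n | x.1 k ≠ z k} : Finset (Fin n)) = {i, j} := by
        ext k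
        simp only [Finset.mem_filter, Finset.mem_univ, true_and, Finset.mem_insert,
          Finset.mem_singleton]
        constructor
        · intro hk
          by_contra hc
          push_neg at hc
          exact hk (hz_k k hc.1 hc.2).symm
        · rintro (rfl | rfl)
          · rw [hz_i]; exact hi.2
          · rw [hz_j]; exact hj.2
      show #({k : Fin n | x.1 k ≠ z k} : Finset (Fin n)) = 2
      rw [hset]
      exact Finset.card_pair hij
    have hd : hammingDist zz.1 y.1 = 2 * d := by
      have hset : ({k : Fin n | z k ≠ y.1 k} : Finset (Fin n)) =
          ({k : Fin n | x.1 k ≠ y.1 k} : Finset (Fin n)) \ {i, j} := by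
        ext k
        simp only [Finset.mem_filter, Finset.mem_univ, true_and, Finset.mem_sdiff,
          Finset.mem_insert, Finset.mem_singleton]
        by_cases h1 : k = i
        · subst h1; simp [hz_i]
        · by_cases h2 : k = j
          · subst h2; simp [hz_j]
          · rw [hz_k k h1 h2]; simp [h1, h2]
      show #({k : Fin n | z k ≠ y.1 k} : Finset (Fin n)) = 2 * d
      rw [hset, Finset.card_sdiff_of_subset]
      · rw [h', Finset.card_pair hij]; omega
      · intro k hk
        simp only [Finset.mem_insert, Finset.mem_singleton] at hk
        rcases hk with rfl | rfl
        · exact Finset.mem_filter.mpr ⟨Finset.mem_univ _, hi.2⟩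
        · exact Finset.mem_filter.mpr ⟨Finset.mem_univ _, hj.2⟩
    obtain ⟨w, hw⟩ := ih zz y hd
    exact ⟨SimpleGraph.Walk.cons hadj w, by rw [SimpleGraph.Walk.length_cons]; omega⟩

lemma halvedCube_dist_le (n : ℕ) (x y : {x : Fin n → ZMod 2 // ∑ i, x i = 0}) :
    2 * (halvedCubeGraph n).dist x y ≤ hammingDist x.1 y.1 := by
  have heven : 2 ∣ hammingDist x.1 y.1 := by
    rw [← ZMod.natCast_eq_zero_iff, ham_cast, Finset.sum_add_distrib, x.2, y.2,
      add_zero]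
  obtain ⟨d, hd⟩ := heven
  obtain ⟨w, hw⟩ := halvedCube_walk n d x y hd
  have := SimpleGraph.dist_le w
  omega


/-- `burn((1/2)H(n,2)) ≤ ⌈n/4⌉ + 1`. -/
theorem halvedCube_burningNumber_le (n : ℕ) (hn : 2 ≤ n) :
    burningNumber (halvedCubeGraph n) ≤ (n + 3) / 4 + 1 := by
  set c := (n + 3) / 4 with hc
  have hc1 : 1 ≤ c := by omega
  have h4c : n ≤ 4 * c := by omega
  set m := 2 * (n / 2) with hm
  have hmn : m ≤ n := by omega
  have hmn1 : n ≤ m + 1 := by omega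
  have hzsum : ∑ i : Fin n, (0 : Fin n → ZMod 2) i = 0 := by simp
  set zv : {x : Fin n → ZMod 2 // ∑ i, x i = 0} := ⟨0, hzsum⟩ with hzv
  set wf : Fin n → ZMod 2 := fun k => if (k : ℕ) < m then 1 else 0 with hwf
  have hwsum : ∑ i, wf i = 0 := by
    rw [hwf]
    rw [Finset.sum_boole, card_filter_val_lt n m hmn]
    exact (ZMod.natCast_eq_zero_iff m 2).mpr ⟨n / 2, hm⟩
  set wv : {x : Fin n → ZMod 2 // ∑ i, x i = 0} := ⟨wf, hwsum⟩ with hwv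
  apply Nat.sInf_le
  refine ⟨fun i => if (i : ℕ) = 1 then wv else zv, fun x => ?_⟩
  set wt := #({k : Fin n | x.1 k ≠ 0} : Finset (Fin n)) with hwt
  have hwt_even : 2 ∣ wt := by
    rw [← ZMod.natCast_eq_zero_iff, hwt, ← Finset.sum_boole]
    calc (∑ k : Fin n, if x.1 k ≠ 0 then (1 : ZMod 2) else 0)
        = ∑ k : Fin n, (x.1 k + 0) := Finset.sum_congr rfl fun k _ => zmod2_ne_iff _ _
      _ = 0 := by simpa using x.2
  by_cases hcase : wt ≤ 2 * c
  · refine ⟨⟨0, by omega⟩, ?_⟩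
    simp only [Fin.val_mk]
    rw [if_neg (by omega)]
    have hham : hammingDist zv.1 x.1 = wt := by
      show hammingDist (0 : Fin n → ZMod 2) x.1 = wt
      rw [hammingDist_zero_left]
      rfl
    have := halvedCube_dist_le n zv x
    omega
  · refine ⟨⟨1, by omega⟩, ?_⟩
    simp only [Fin.val_mk]
    rw [if_true]
    set ones : Fin n → ZMod 2 := fun _ => 1 with hones
    have h1 : hammingDist wf ones ≤ n - m := by
      have hset : ({k : Fin n | wf k ≠ ones k} : Finset (Fin n)) =
          ({k : Fin n | ¬ (k : ℕ) < m} : Finset (Fin n)) := by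
        ext k
        simp only [Finset.mem_filter, Finset.mem_univ, true_and, hwf, hones]
        by_cases hk : (k : ℕ) < m <;> simp [hk]
      have hcards := Finset.card_filter_add_card_filter_not
        (s := (Finset.univ : Finset (Fin n))) (p := fun k : Fin n => (k : ℕ) < m)
      rw [card_filter_val_lt n m hmn] at hcards
      show #({k : Fin n | wf k ≠ ones k} : Finset (Fin n)) ≤ n - m
      rw [hset]
      simp only [Finset.card_univ, Fintype.card_fin] at hcards
      omega
    have h2 : hammingDist ones x.1 + wt = n := by
      have hset : ({k : Fin n | ones k ≠ x.1 k} : Finset (Fin n)) =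
          ({k : Fin n | ¬ x.1 k ≠ 0} : Finset (Fin n)) := by
        ext k
        simp only [Finset.mem_filter, Finset.mem_univ, true_and, hones]
        have : ∀ a : ZMod 2, ((1 : ZMod 2) ≠ a ↔ ¬ a ≠ 0) := by decide
        exact this _
      have hcards := Finset.card_filter_add_card_filter_not
        (s := (Finset.univ : Finset (Fin n))) (p := fun k : Fin n => x.1 k ≠ 0)
      show #({k : Fin n | ones k ≠ x.1 k} : Finset (Fin n)) + wt = n
      rw [hset]
      simp only [Finset.card_univ, Fintype.card_fin] at hcards
      omega
    have htri : hammingDist wv.1 x.1 ≤ hammingDist wf ones + hammingDist ones x.1 :=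
      hammingDist_triangle _ _ _
    have := halvedCube_dist_le n wv x
    omega
end

section
/- The burning number of the Hamming graph H(n,q) is at most ⌊(1 − 1/q)n + (q+1)/2⌋. -/
open Finset

lemma hamming_exists_walk (n q : ℕ) (x y : Fin n → Fin q) :
    ∃ w : (hammingGraph n q).Walk x y, w.length = hammingDist x y := by
  generalize hd : hammingDist x y = d
  induction d generalizing x with
  | zero =>
    obtain rfl := hammingDist_eq_zero.mp hd
    exact ⟨.nil, rfl⟩
  | succ d ih =>
    have hne : x ≠ y := by
      rintro rfl; simp [hammingDist_self] at hd
    obtain ⟨i, hi⟩ : ∃ i, x i ≠ y i := Function.ne_iff.mp hne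
    set x' := Function.update x i (y i) with hx'
    have hmem : i ∈ ({j | x j ≠ y j} : Finset (Fin n)) := by simpa using hi
    have hadj : (hammingGraph n q).Adj x x' := by
      show hammingDist x x' = 1
      have h1 : ({j | x j ≠ x' j} : Finset (Fin n)) = {i} := by
        ext j
        by_cases h : j = i <;> simp [hx', Function.update_apply, h, hi, Ne.symm hi]
      show #{j | x j ≠ x' j} = 1
      rw [h1, card_singleton]
    have hd' : hammingDist x' y = d := by
      have h2 : ({j | x' j ≠ y j} : Finset (Fin n)) = ({j | x j ≠ y j} : Finset (Fin n)).erase i := by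
        ext j
        by_cases h : j = i <;> simp [hx', Function.update_apply, h]
      show #{j | x' j ≠ y j} = d
      rw [h2, card_erase_of_mem hmem]
      show hammingDist x y - 1 = d
      omega
    obtain ⟨w, hw⟩ := ih x' hd'
    exact ⟨.cons hadj w, by simp [hw]⟩

lemma hamming_dist_le (n q : ℕ) (x y : Fin n → Fin q) :
    (hammingGraph n q).dist x y ≤ hammingDist x y := by
  obtain ⟨w, hw⟩ := hamming_exists_walk n q x y
  simpa [hw] using SimpleGraph.dist_le w

lemma hamming_const_dist (n q : ℕ) (x : Fin n → Fin q) (j : Fin q) :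
    hammingDist (fun _ => j) x + #{i | x i = j} = n := by
  have h1 : ({i | (fun _ => j) i ≠ x i} : Finset (Fin n)) = ({i | x i = j} : Finset (Fin n))ᶜ := by
    ext i; simp [eq_comm]
  have hle : #({i | x i = j} : Finset (Fin n)) ≤ n := by
    simpa using card_le_univ ({i | x i = j} : Finset (Fin n))
  show #{i | (fun _ => j) i ≠ x i} + _ = n
  rw [h1, Finset.card_compl]
  simp only [Fintype.card_fin]
  omega

lemma hamming_fiber_sum (n q : ℕ) (x : Fin n → Fin q) :
    ∑ j : Fin q, #{i | x i = j} = n := by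
  have := Finset.card_eq_sum_card_fiberwise
    (s := (univ : Finset (Fin n))) (t := (univ : Finset (Fin q))) (f := x)
    (fun i _ => mem_univ (x i))
  simp only [card_univ, Fintype.card_fin] at this
  exact this.symm


/-- `burn(H(n,q)) ≤ ⌊(1 - 1/q)n + (q+1)/2⌋`. -/
theorem hamming_burningNumber_le (n q : ℕ) (hn : 1 ≤ n) (hq : 2 ≤ q) :
    burningNumber (hammingGraph n q) ≤ ⌊(1 - 1 / (q : ℝ)) * n + ((q : ℝ) + 1) / 2⌋₊ := by
  set b := ⌊(1 - 1 / (q : ℝ)) * n + ((q : ℝ) + 1) / 2⌋₊ with hbdef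
  have hq0 : (0:ℝ) < q := by positivity
  have hq2 : (2:ℝ) ≤ q := by exact_mod_cast hq
  have hn1 : (1:ℝ) ≤ n := by exact_mod_cast hn
  have hinv : (q:ℝ) * (1/q) = 1 := by field_simp
  have ht2 : (1:ℝ)/q ≤ 1/2 := by
    rw [div_le_div_iff₀ hq0 (by norm_num)]; linarith
  have hbgt : ((1 - 1/(q:ℝ)) * n + ((q:ℝ)+1)/2) < (b:ℝ) + 1 := Nat.lt_floor_add_one _
  have hbR : (1 - 1/(q:ℝ)) * n + ((q:ℝ)-1)/2 < (b:ℝ) := by linarith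
  have hb2 : 2 ≤ b := by
    have h1 : (1:ℝ) < (b:ℝ) := by nlinarith
    exact_mod_cast h1
  apply Nat.sInf_le
  have hq0' : (0:ℕ) < q := by omega
  set c : Fin b → Fin n → Fin q :=
    fun i _ => if h : (i:ℕ) < q then ⟨(i:ℕ), h⟩ else ⟨0, hq0'⟩ with hcdef
  refine ⟨c, ?_⟩
  intro x
  by_cases hcase : q ≤ b
  · by_contra hcon
    push_neg at hcon
    have key : ∀ j : Fin q, #{i | x i = j} + b ≤ n + (j:ℕ) := by
      intro j
      have hjb : (j:ℕ) < b := lt_of_lt_of_le j.2 hcase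
      have hc := hcon ⟨(j:ℕ), hjb⟩
      have hv : c ⟨(j:ℕ), hjb⟩ = fun _ => j := by
        funext i; simp [hcdef, j.2]
      rw [hv] at hc
      simp only [Fin.val_mk] at hc
      have hdl := hamming_dist_le n q (fun _ => j) x
      have hcd := hamming_const_dist n q x j
      omega
    have hsum := hamming_fiber_sum n q x
    have hsum2 : ∑ j : Fin q, (#{i | x i = j} + b) ≤ ∑ j : Fin q, (n + (j:ℕ)) :=
      Finset.sum_le_sum (fun j _ => key j)
    have hgauss : (∑ j : Fin q, (j:ℕ)) * 2 = q * (q - 1) := by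
      rw [Fin.sum_univ_eq_sum_range (fun i => i) q]
      exact Finset.sum_range_id_mul_two q
    rw [Finset.sum_add_distrib, Finset.sum_add_distrib, hsum] at hsum2
    simp only [Finset.sum_const, card_univ, Fintype.card_fin, smul_eq_mul] at hsum2
    have hqq : q * q = q * (q - 1) + q := by
      nth_rewrite 2 [show q = (q - 1) + 1 from by omega]
      rw [Nat.mul_add, Nat.mul_one]
    have hgauss' : (∑ j : Fin q, (j:ℕ)) * 2 + q = q * q := by omega
    have hqtn : (q:ℝ) * (1/q * n) = n := by field_simp
    have hsum2R : (n:ℝ) + q * b ≤ q * n + ((∑ j : Fin q, (j:ℕ) : ℕ) : ℝ) := by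
      exact_mod_cast hsum2
    have hgaussR : ((∑ j : Fin q, (j:ℕ) : ℕ) : ℝ) * 2 + q = q * q := by
      exact_mod_cast hgauss'
    nlinarith [mul_lt_mul_of_pos_left hbR hq0, hqtn, hsum2R, hgaussR]
  · push_neg at hcase
    have hble : (b:ℝ) ≤ (q:ℝ) - 1 := by
      have h1 : (b:ℝ) + 1 ≤ (q:ℝ) := by exact_mod_cast hcase
      linarith
    have hnb : (n:ℝ) < b := by
      nlinarith [mul_le_mul_of_nonneg_left ht2 (by positivity : (0:ℝ) ≤ (n:ℝ))]
    have hnb' : n + 1 ≤ b := by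
      have : n < b := by exact_mod_cast hnb
      omega
    refine ⟨⟨0, by omega⟩, ?_⟩
    have hc0 : c ⟨0, by omega⟩ = fun _ => (⟨0, hq0'⟩ : Fin q) := by
      funext i; simp [hcdef, hq0']
    rw [hc0]
    simp only [Fin.val_mk]
    have hdl := hamming_dist_le n q (fun _ => (⟨0, hq0'⟩ : Fin q)) x
    have hcard : hammingDist (fun _ : Fin n => (⟨0, hq0'⟩ : Fin q)) x ≤ n := by
      simpa using hammingDist_le_card_fintype
        (x := fun _ : Fin n => (⟨0, hq0'⟩ : Fin q)) (y := x)
    omega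
end

section
/- For the cycle C_n, the sequence v_j = (2⌈√n⌉ + 1)j − j² mod n, for j = 1,…,⌈√n⌉, is a burning sequence, so the burning number of C_n is at most ⌈√n⌉. -/
open Finset

lemma cyc_walk (n : ℕ) (hn : 2 ≤ n) (k : ℕ) (a : ZMod n) :
    ∃ w : (cycleGraphZMod n).Walk a (a + (k : ℕ)), w.length = k := by
  induction k generalizing a with
  | zero =>
    refine ⟨(SimpleGraph.Walk.nil).copy rfl (by push_cast; ring), by simp⟩
  | succ k ih =>
    obtain ⟨w, hw⟩ := ih (a + 1)
    have hadj : (cycleGraphZMod n).Adj a (a + 1) := by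
      haveI : Fact (1 < n) := ⟨hn⟩
      refine ⟨fun h => ?_, Or.inr (by ring)⟩
      exact one_ne_zero (left_eq_add.mp h)
    refine ⟨(SimpleGraph.Walk.cons hadj w).copy rfl (by push_cast; ring), by simp [hw]⟩

lemma cyc_dist_add (n : ℕ) (hn : 2 ≤ n) (k : ℕ) (a : ZMod n) :
    (cycleGraphZMod n).dist a (a + (k : ℕ)) ≤ k := by
  obtain ⟨w, hw⟩ := cyc_walk n hn k a
  calc (cycleGraphZMod n).dist a (a + (k:ℕ)) ≤ w.length := SimpleGraph.dist_le w
    _ = k := hw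

lemma cyc_dist_sub (n : ℕ) (hn : 2 ≤ n) (k : ℕ) (a : ZMod n) :
    (cycleGraphZMod n).dist a (a - (k : ℕ)) ≤ k := by
  have := cyc_dist_add n hn k (a - (k : ℕ))
  rwa [sub_add_cancel, SimpleGraph.dist_comm] at this

/-- For the cycle `C_n`, the sequence `v_j = (2⌈√n⌉+1)j - j²` (mod `n`),
`j = 1, …, ⌈√n⌉`, is a burning sequence, so `burn(C_n) ≤ ⌈√n⌉`. -/
theorem cycle_burning (n : ℕ) (hn : 1 ≤ n) :
    IsBurningSeq (cycleGraphZMod n)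
      (fun j : Fin ⌈Real.sqrt n⌉₊ =>
        (((2 * ⌈Real.sqrt n⌉₊ + 1) * ((j : ℕ) + 1) - ((j : ℕ) + 1) ^ 2 : ℕ) : ZMod n)) ∧
    burningNumber (cycleGraphZMod n) ≤ ⌈Real.sqrt n⌉₊ := by
  set b : ℕ := ⌈Real.sqrt n⌉₊ with hbdef
  have hseq : IsBurningSeq (cycleGraphZMod n)
      (fun j : Fin b =>
        (((2 * b + 1) * ((j : ℕ) + 1) - ((j : ℕ) + 1) ^ 2 : ℕ) : ZMod n)) := by
    have hb1 : 1 ≤ b := by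
      have : (0:ℝ) < Real.sqrt n := Real.sqrt_pos.mpr (by exact_mod_cast hn)
      exact Nat.one_le_iff_ne_zero.mpr (by positivity)
    have hbb : n ≤ b ^ 2 := by
      have h1 : Real.sqrt n ≤ (b : ℝ) := Nat.le_ceil _
      have h2 : (n : ℝ) ≤ (b : ℝ) ^ 2 := by
        nlinarith [Real.sq_sqrt (show (0:ℝ) ≤ n by positivity), Real.sqrt_nonneg (n:ℝ)]
      exact_mod_cast h2
    intro x
    haveI : NeZero n := ⟨by omega⟩
    -- choose representative M ∈ [b+1, b+n] with M ≡ x (mod n)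
    set m : ℕ := x.val with hmdef
    have hxm : ((m : ℕ) : ZMod n) = x := ZMod.natCast_rightInverse x
    set r : ℕ := (m + n * (b + 1) - (b + 1)) % n with hrdef
    have hr : r < n := Nat.mod_lt _ (by omega)
    set M : ℕ := b + 1 + r with hMdef
    have hxM : ((M : ℕ) : ZMod n) = x := by
      have hle : b + 1 ≤ m + n * (b + 1) :=
        le_trans (Nat.le_mul_of_pos_left _ (by omega)) (Nat.le_add_left _ _)
      have hA : (m + n * (b + 1) - (b + 1)) + (b + 1) = m + n * (b + 1) :=
        Nat.sub_add_cancel hle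
      have : ((M : ℕ) : ZMod n) = ((m : ℕ) : ZMod n) := by
        rw [hMdef, hrdef]
        push_cast [ZMod.natCast_mod]
        have := congrArg (fun t : ℕ => ((t : ℕ) : ZMod n)) hA
        push_cast at this
        rw [ZMod.natCast_self] at this
        linear_combination this
      rw [this, hxm]
    have hM1 : b + 1 ≤ M := by omega
    have hM2 : M ≤ b + b ^ 2 := by omega
    -- find the right index
    set S : ℕ := b + b ^ 2 - M with hSdef
    set k : ℕ := Nat.sqrt S with hkdef
    have hkS : k ^ 2 ≤ S := Nat.sqrt_le' S
    have hkS2 : S < (k + 1) ^ 2 := Nat.lt_succ_sqrt' S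
    have hkb : k < b := by
      rw [hkdef]
      rw [Nat.sqrt_lt']
      have : S ≤ b ^ 2 - 1 := by omega
      have hb2 : 1 ≤ b ^ 2 := Nat.one_le_pow _ _ (by omega)
      omega
    set d : ℕ := b - k with hddef
    have hdk : d + k = b := by omega
    refine ⟨⟨b - 1 - k, by omega⟩, ?_⟩
    simp only
    have hi1 : (b - 1 - k) + 1 = d := by omega
    rw [hi1]
    set c : ℕ := (2 * b + 1) * d - d ^ 2 with hcdef
    have hcd : (2 * b + 1) * d = d ^ 2 + d * (d + 2 * k + 1) := by
      rw [← hdk]; ring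
    have hc : c = d * (d + 2 * k + 1) := by
      rw [hcdef, hcd, Nat.add_sub_cancel_left]
    have hkey : c + k + k ^ 2 = b + b ^ 2 := by
      rw [hc, ← hdk]; ring
    -- M is within distance k of c
    have hMk : M + k ^ 2 ≤ b + b ^ 2 := by omega
    have hMc1 : M ≤ c + k := by omega
    have hMc2 : c ≤ M + k := by
      have h1 : b + b ^ 2 < M + (k + 1) ^ 2 := by omega
      have h2 : (k + 1) ^ 2 = k ^ 2 + 2 * k + 1 := by ring
      omega
    have hbk : b - 1 - (b - 1 - k) = k := by omega
    rw [hbk]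
    rcases le_total c M with hcm | hcm
    · -- x = c + t
      set t : ℕ := M - c with htdef
      have ht : t ≤ k := by omega
      have hxc : x = ((c : ℕ) : ZMod n) + (t : ℕ) := by
        rw [← hxM]
        have : M = c + t := by omega
        rw [this]; push_cast; ring
      rw [hxc]
      rcases Nat.lt_or_ge n 2 with h2 | h2
      · have hn1 : n = 1 := by omega
        subst hn1
        rw [Subsingleton.elim (((c:ℕ):ZMod 1) + (t:ℕ)) ((c:ℕ):ZMod 1)]
        simp [SimpleGraph.dist_self]
      · exact le_trans (cyc_dist_add n h2 t _) ht
    · -- x = c - t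
      set t : ℕ := c - M with htdef
      have ht : t ≤ k := by omega
      have hxc : x = ((c : ℕ) : ZMod n) - (t : ℕ) := by
        rw [← hxM]
        have : M + t = c := by omega
        have := congrArg (fun u : ℕ => ((u : ℕ) : ZMod n)) this
        push_cast at this
        linear_combination this
      rw [hxc]
      rcases Nat.lt_or_ge n 2 with h2 | h2
      · have hn1 : n = 1 := by omega
        subst hn1
        rw [Subsingleton.elim (((c:ℕ):ZMod 1) - (t:ℕ)) ((c:ℕ):ZMod 1)]
        simp [SimpleGraph.dist_self]
      · exact le_trans (cyc_dist_sub n h2 t _) ht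
  exact ⟨hseq, Nat.sInf_le ⟨_, hseq⟩⟩
end
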